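/- On ℝ⁶ with coordinates (v₁,…,v₆) define the vector fields X₁ᴿ = ∂/∂v₁ + v₅ ∂/∂v₄ − (1/2)v₅² ∂/∂v₆, X₂ᴿ = v₁ ∂/∂v₁ + ∂/∂v₂ + (1/2)v₄ ∂/∂v₄ − (1/2)v₅ ∂/∂v₅, X₃ᴿ = v₁² ∂/∂v₁ + 2v₁ ∂/∂v₂ + e^{v₂} ∂/∂v₃ − v₄ ∂/∂v₅ + (1/2)v₄² ∂/∂v₆, X₄ᴿ = ∂/∂v₄, X₅ᴿ = ∂/∂v₅ − v₄ ∂/∂v₆, X₆ᴿ = ∂/∂v₆. Then for each α ∈ {1,…,6} the vector field v ↦ e^{−v₂}·Xαᴿ(v) is divergence-free on ℝ⁶, i.e. the trace of its Fréchet derivative vanishes at every point. (This is the coordinate expression of the invariance ℒ_{Xαᴿ}Θ^{do} = 0 of the multisymplectic volume form Θ^{do} = e^{−v₂} dv₁∧…∧dv₆.) -/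

import Mathlib

/-- The divergence of a vector field on ℝⁿ at a point: the trace of its
Fréchet derivative there. -/
noncomputable def vdiv {n : ℕ} (V : (Fin n → ℝ) → (Fin n → ℝ))
    (p : Fin n → ℝ) : ℝ :=
  LinearMap.trace ℝ (Fin n → ℝ) (fderiv ℝ V p).toLinearMap

/-- The right-invariant vector fields X₁ᴿ,…,X₆ᴿ of the dissipative quantum
harmonic oscillator system on ℝ⁶, in coordinates (v₁,…,v₆) = (p 0,…,p 5). -/
noncomputable def doXR : Fin 6 → (Fin 6 → ℝ) → (Fin 6 → ℝ) :=
  ![fun p => ![1, 0, 0, p 4, 0, -(p 4) ^ 2 / 2],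
    fun p => ![p 0, 1, 0, p 3 / 2, -(p 4) / 2, 0],
    fun p => ![(p 0) ^ 2, 2 * p 0, Real.exp (p 1), 0, -(p 3), (p 3) ^ 2 / 2],
    fun _ => ![0, 0, 0, 1, 0, 0],
    fun p => ![0, 0, 0, 0, 1, -(p 3)],
    fun _ => ![0, 0, 0, 0, 0, 1]]

/-- The trace of a continuous linear endomorphism of ℝⁿ is the sum of its
diagonal entries in the standard basis. -/
lemma vdiv_trace_eq {n : ℕ} (f : (Fin n → ℝ) →L[ℝ] (Fin n → ℝ)) :
    LinearMap.trace ℝ (Fin n → ℝ) f.toLinearMap = ∑ i, f (Pi.single i 1) i := by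
  rw [LinearMap.trace_eq_matrix_trace ℝ (Pi.basisFun ℝ (Fin n))]
  simp [Matrix.trace, LinearMap.toMatrix_apply]

/-- The divergence as a sum of diagonal partial derivatives. -/
lemma vdiv_eq {n : ℕ} (V : (Fin n → ℝ) → (Fin n → ℝ)) (p : Fin n → ℝ)
    (h : ∀ i, DifferentiableAt ℝ (fun q => V q i) p) :
    vdiv V p = ∑ i, fderiv ℝ (fun q => V q i) p (Pi.single i 1) := by
  rw [vdiv, vdiv_trace_eq]
  have : fderiv ℝ V p = ContinuousLinearMap.pi fun i => fderiv ℝ (fun q => V q i) p :=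
    fderiv_pi h
  rw [this]; simp

lemma hexp (p : Fin 6 → ℝ) :
    HasFDerivAt (fun q : Fin 6 → ℝ => Real.exp (-(q 1)))
      (Real.exp (-(p 1)) • -(ContinuousLinearMap.proj 1 : (Fin 6 → ℝ) →L[ℝ] ℝ)) p :=
  ((ContinuousLinearMap.proj 1 : (Fin 6 → ℝ) →L[ℝ] ℝ).hasFDerivAt.neg).exp

lemma hproj (j : Fin 6) (p : Fin 6 → ℝ) :
    HasFDerivAt (fun q : Fin 6 → ℝ => q j)
      (ContinuousLinearMap.proj j : (Fin 6 → ℝ) →L[ℝ] ℝ) p :=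
  (ContinuousLinearMap.proj j : (Fin 6 → ℝ) →L[ℝ] ℝ).hasFDerivAt

lemma hsq (j : Fin 6) (p : Fin 6 → ℝ) :
    HasFDerivAt (fun q : Fin 6 → ℝ => q j ^ 2)
      ((2 * p j) • (ContinuousLinearMap.proj j : (Fin 6 → ℝ) →L[ℝ] ℝ)) p := by
  have h := (hproj j p).fun_mul (hproj j p)
  have e : (fun q : Fin 6 → ℝ => q j ^ 2) = fun q => q j * q j := by funext q; ring
  rw [e, two_mul, add_smul]; exact h

/-- For each α, the vector field v ↦ e^{−v₂}·Xαᴿ(v) is divergence-free on ℝ⁶: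
the coordinate expression of the invariance ℒ_{Xαᴿ}Θ^{do} = 0 of the
multisymplectic volume form Θ^{do} = e^{−v₂} dv₁ ∧ … ∧ dv₆. -/
theorem dissipative_oscillator_volume_invariance :
    ∀ (α : Fin 6) (p : Fin 6 → ℝ),
      vdiv (fun q => Real.exp (-(q 1)) • doXR α q) p = 0 := by
  intro α p
  fin_cases α
  · -- α = 0
    rw [vdiv_eq _ p (by
      intro i; fin_cases i
      · exact ((hexp p).fun_mul (hasFDerivAt_const (1:ℝ) p)).differentiableAt
      · exact ((hexp p).fun_mul (hasFDerivAt_const (0:ℝ) p)).differentiableAt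
      · exact ((hexp p).fun_mul (hasFDerivAt_const (0:ℝ) p)).differentiableAt
      · exact ((hexp p).fun_mul (hproj 4 p)).differentiableAt
      · exact ((hexp p).fun_mul (hasFDerivAt_const (0:ℝ) p)).differentiableAt
      · exact ((hexp p).fun_mul (((hsq 4 p).fun_neg).mul_const ((2:ℝ)⁻¹))).differentiableAt)]
    rw [Fin.sum_univ_six]
    show (fderiv ℝ (fun q : Fin 6 → ℝ => Real.exp (-(q 1)) * 1) p) (Pi.single 0 1)
      + (fderiv ℝ (fun q : Fin 6 → ℝ => Real.exp (-(q 1)) * 0) p) (Pi.single 1 1)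
      + (fderiv ℝ (fun q : Fin 6 → ℝ => Real.exp (-(q 1)) * 0) p) (Pi.single 2 1)
      + (fderiv ℝ (fun q : Fin 6 → ℝ => Real.exp (-(q 1)) * q 4) p) (Pi.single 3 1)
      + (fderiv ℝ (fun q : Fin 6 → ℝ => Real.exp (-(q 1)) * 0) p) (Pi.single 4 1)
      + (fderiv ℝ (fun q : Fin 6 → ℝ => Real.exp (-(q 1)) * (-(q 4) ^ 2 * (2:ℝ)⁻¹)) p) (Pi.single 5 1)
      = 0
    rw [((hexp p).fun_mul (hasFDerivAt_const (1:ℝ) p)).fderiv,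
       ((hexp p).fun_mul (hasFDerivAt_const (0:ℝ) p)).fderiv,
       ((hexp p).fun_mul (hproj 4 p)).fderiv,
       ((hexp p).fun_mul (((hsq 4 p).fun_neg).mul_const ((2:ℝ)⁻¹))).fderiv]
    simp only [ContinuousLinearMap.add_apply, ContinuousLinearMap.coe_smul', Pi.smul_apply,
      ContinuousLinearMap.neg_apply, ContinuousLinearMap.proj_apply, ContinuousLinearMap.zero_apply,
      ContinuousLinearMap.smul_apply, smul_eq_mul, Pi.single_apply]
    simp
  · -- α = 1
    rw [vdiv_eq _ p (by
      intro i; fin_cases i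
      · exact ((hexp p).fun_mul (hproj 0 p)).differentiableAt
      · exact ((hexp p).fun_mul (hasFDerivAt_const (1:ℝ) p)).differentiableAt
      · exact ((hexp p).fun_mul (hasFDerivAt_const (0:ℝ) p)).differentiableAt
      · exact ((hexp p).fun_mul ((hproj 3 p).mul_const ((2:ℝ)⁻¹))).differentiableAt
      · exact ((hexp p).fun_mul (((hproj 4 p).fun_neg).mul_const ((2:ℝ)⁻¹))).differentiableAt
      · exact ((hexp p).fun_mul (hasFDerivAt_const (0:ℝ) p)).differentiableAt)]
    rw [Fin.sum_univ_six]
    show (fderiv ℝ (fun q : Fin 6 → ℝ => Real.exp (-(q 1)) * q 0) p) (Pi.single 0 1)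
      + (fderiv ℝ (fun q : Fin 6 → ℝ => Real.exp (-(q 1)) * 1) p) (Pi.single 1 1)
      + (fderiv ℝ (fun q : Fin 6 → ℝ => Real.exp (-(q 1)) * 0) p) (Pi.single 2 1)
      + (fderiv ℝ (fun q : Fin 6 → ℝ => Real.exp (-(q 1)) * (q 3 * (2:ℝ)⁻¹)) p) (Pi.single 3 1)
      + (fderiv ℝ (fun q : Fin 6 → ℝ => Real.exp (-(q 1)) * (-(q 4) * (2:ℝ)⁻¹)) p) (Pi.single 4 1)
      + (fderiv ℝ (fun q : Fin 6 → ℝ => Real.exp (-(q 1)) * 0) p) (Pi.single 5 1)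
      = 0
    rw [((hexp p).fun_mul (hproj 0 p)).fderiv,
       ((hexp p).fun_mul (hasFDerivAt_const (1:ℝ) p)).fderiv,
       ((hexp p).fun_mul (hasFDerivAt_const (0:ℝ) p)).fderiv,
       ((hexp p).fun_mul ((hproj 3 p).mul_const ((2:ℝ)⁻¹))).fderiv,
       ((hexp p).fun_mul (((hproj 4 p).fun_neg).mul_const ((2:ℝ)⁻¹))).fderiv]
    simp only [ContinuousLinearMap.add_apply, ContinuousLinearMap.coe_smul', Pi.smul_apply,
      ContinuousLinearMap.neg_apply, ContinuousLinearMap.proj_apply, ContinuousLinearMap.zero_apply,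
      ContinuousLinearMap.smul_apply, smul_eq_mul, Pi.single_apply]
    simp
  · -- α = 2
    rw [vdiv_eq _ p (by
      intro i; fin_cases i
      · exact ((hexp p).fun_mul (hsq 0 p)).differentiableAt
      · exact ((hexp p).fun_mul ((hproj 0 p).const_mul 2)).differentiableAt
      · exact ((hexp p).fun_mul ((hproj 1 p).exp)).differentiableAt
      · exact ((hexp p).fun_mul (hasFDerivAt_const (0:ℝ) p)).differentiableAt
      · exact ((hexp p).fun_mul ((hproj 3 p).fun_neg)).differentiableAt
      · exact ((hexp p).fun_mul ((hsq 3 p).mul_const ((2:ℝ)⁻¹))).differentiableAt)]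
    rw [Fin.sum_univ_six]
    show (fderiv ℝ (fun q : Fin 6 → ℝ => Real.exp (-(q 1)) * q 0 ^ 2) p) (Pi.single 0 1)
      + (fderiv ℝ (fun q : Fin 6 → ℝ => Real.exp (-(q 1)) * (2 * q 0)) p) (Pi.single 1 1)
      + (fderiv ℝ (fun q : Fin 6 → ℝ => Real.exp (-(q 1)) * Real.exp (q 1)) p) (Pi.single 2 1)
      + (fderiv ℝ (fun q : Fin 6 → ℝ => Real.exp (-(q 1)) * 0) p) (Pi.single 3 1)
      + (fderiv ℝ (fun q : Fin 6 → ℝ => Real.exp (-(q 1)) * (-(q 3))) p) (Pi.single 4 1)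
      + (fderiv ℝ (fun q : Fin 6 → ℝ => Real.exp (-(q 1)) * (q 3 ^ 2 * (2:ℝ)⁻¹)) p) (Pi.single 5 1)
      = 0
    rw [((hexp p).fun_mul (hsq 0 p)).fderiv,
       ((hexp p).fun_mul ((hproj 0 p).const_mul 2)).fderiv,
       ((hexp p).fun_mul ((hproj 1 p).exp)).fderiv,
       ((hexp p).fun_mul (hasFDerivAt_const (0:ℝ) p)).fderiv,
       ((hexp p).fun_mul ((hproj 3 p).fun_neg)).fderiv,
       ((hexp p).fun_mul ((hsq 3 p).mul_const ((2:ℝ)⁻¹))).fderiv]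
    simp only [ContinuousLinearMap.add_apply, ContinuousLinearMap.coe_smul', Pi.smul_apply,
      ContinuousLinearMap.neg_apply, ContinuousLinearMap.proj_apply, ContinuousLinearMap.zero_apply,
      ContinuousLinearMap.smul_apply, smul_eq_mul, Pi.single_apply]
    simp
    ring
  · -- α = 3
    rw [vdiv_eq _ p (by
      intro i; fin_cases i
      · exact ((hexp p).fun_mul (hasFDerivAt_const (0:ℝ) p)).differentiableAt
      · exact ((hexp p).fun_mul (hasFDerivAt_const (0:ℝ) p)).differentiableAt
      · exact ((hexp p).fun_mul (hasFDerivAt_const (0:ℝ) p)).differentiableAt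
      · exact ((hexp p).fun_mul (hasFDerivAt_const (1:ℝ) p)).differentiableAt
      · exact ((hexp p).fun_mul (hasFDerivAt_const (0:ℝ) p)).differentiableAt
      · exact ((hexp p).fun_mul (hasFDerivAt_const (0:ℝ) p)).differentiableAt)]
    rw [Fin.sum_univ_six]
    show (fderiv ℝ (fun q : Fin 6 → ℝ => Real.exp (-(q 1)) * 0) p) (Pi.single 0 1)
      + (fderiv ℝ (fun q : Fin 6 → ℝ => Real.exp (-(q 1)) * 0) p) (Pi.single 1 1)
      + (fderiv ℝ (fun q : Fin 6 → ℝ => Real.exp (-(q 1)) * 0) p) (Pi.single 2 1)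
      + (fderiv ℝ (fun q : Fin 6 → ℝ => Real.exp (-(q 1)) * 1) p) (Pi.single 3 1)
      + (fderiv ℝ (fun q : Fin 6 → ℝ => Real.exp (-(q 1)) * 0) p) (Pi.single 4 1)
      + (fderiv ℝ (fun q : Fin 6 → ℝ => Real.exp (-(q 1)) * 0) p) (Pi.single 5 1)
      = 0
    rw [((hexp p).fun_mul (hasFDerivAt_const (1:ℝ) p)).fderiv,
       ((hexp p).fun_mul (hasFDerivAt_const (0:ℝ) p)).fderiv]
    simp only [ContinuousLinearMap.add_apply, ContinuousLinearMap.coe_smul', Pi.smul_apply,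
      ContinuousLinearMap.neg_apply, ContinuousLinearMap.proj_apply, ContinuousLinearMap.zero_apply,
      ContinuousLinearMap.smul_apply, smul_eq_mul, Pi.single_apply]
    simp
  · -- α = 4
    rw [vdiv_eq _ p (by
      intro i; fin_cases i
      · exact ((hexp p).fun_mul (hasFDerivAt_const (0:ℝ) p)).differentiableAt
      · exact ((hexp p).fun_mul (hasFDerivAt_const (0:ℝ) p)).differentiableAt
      · exact ((hexp p).fun_mul (hasFDerivAt_const (0:ℝ) p)).differentiableAt
      · exact ((hexp p).fun_mul (hasFDerivAt_const (0:ℝ) p)).differentiableAt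
      · exact ((hexp p).fun_mul (hasFDerivAt_const (1:ℝ) p)).differentiableAt
      · exact ((hexp p).fun_mul ((hproj 3 p).fun_neg)).differentiableAt)]
    rw [Fin.sum_univ_six]
    show (fderiv ℝ (fun q : Fin 6 → ℝ => Real.exp (-(q 1)) * 0) p) (Pi.single 0 1)
      + (fderiv ℝ (fun q : Fin 6 → ℝ => Real.exp (-(q 1)) * 0) p) (Pi.single 1 1)
      + (fderiv ℝ (fun q : Fin 6 → ℝ => Real.exp (-(q 1)) * 0) p) (Pi.single 2 1)
      + (fderiv ℝ (fun q : Fin 6 → ℝ => Real.exp (-(q 1)) * 0) p) (Pi.single 3 1)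
      + (fderiv ℝ (fun q : Fin 6 → ℝ => Real.exp (-(q 1)) * 1) p) (Pi.single 4 1)
      + (fderiv ℝ (fun q : Fin 6 → ℝ => Real.exp (-(q 1)) * (-(q 3))) p) (Pi.single 5 1)
      = 0
    rw [((hexp p).fun_mul (hasFDerivAt_const (1:ℝ) p)).fderiv,
       ((hexp p).fun_mul (hasFDerivAt_const (0:ℝ) p)).fderiv,
       ((hexp p).fun_mul ((hproj 3 p).fun_neg)).fderiv]
    simp only [ContinuousLinearMap.add_apply, ContinuousLinearMap.coe_smul', Pi.smul_apply,
      ContinuousLinearMap.neg_apply, ContinuousLinearMap.proj_apply, ContinuousLinearMap.zero_apply,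
      ContinuousLinearMap.smul_apply, smul_eq_mul, Pi.single_apply]
    simp
  · -- α = 5
    rw [vdiv_eq _ p (by
      intro i; fin_cases i
      · exact ((hexp p).fun_mul (hasFDerivAt_const (0:ℝ) p)).differentiableAt
      · exact ((hexp p).fun_mul (hasFDerivAt_const (0:ℝ) p)).differentiableAt
      · exact ((hexp p).fun_mul (hasFDerivAt_const (0:ℝ) p)).differentiableAt
      · exact ((hexp p).fun_mul (hasFDerivAt_const (0:ℝ) p)).differentiableAt
      · exact ((hexp p).fun_mul (hasFDerivAt_const (0:ℝ) p)).differentiableAt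
      · exact ((hexp p).fun_mul (hasFDerivAt_const (1:ℝ) p)).differentiableAt)]
    rw [Fin.sum_univ_six]
    show (fderiv ℝ (fun q : Fin 6 → ℝ => Real.exp (-(q 1)) * 0) p) (Pi.single 0 1)
      + (fderiv ℝ (fun q : Fin 6 → ℝ => Real.exp (-(q 1)) * 0) p) (Pi.single 1 1)
      + (fderiv ℝ (fun q : Fin 6 → ℝ => Real.exp (-(q 1)) * 0) p) (Pi.single 2 1)
      + (fderiv ℝ (fun q : Fin 6 → ℝ => Real.exp (-(q 1)) * 0) p) (Pi.single 3 1)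
      + (fderiv ℝ (fun q : Fin 6 → ℝ => Real.exp (-(q 1)) * 0) p) (Pi.single 4 1)
      + (fderiv ℝ (fun q : Fin 6 → ℝ => Real.exp (-(q 1)) * 1) p) (Pi.single 5 1)
      = 0
    rw [((hexp p).fun_mul (hasFDerivAt_const (1:ℝ) p)).fderiv,
       ((hexp p).fun_mul (hasFDerivAt_const (0:ℝ) p)).fderiv]
    simp only [ContinuousLinearMap.add_apply, ContinuousLinearMap.coe_smul', Pi.smul_apply,
      ContinuousLinearMap.neg_apply, ContinuousLinearMap.proj_apply, ContinuousLinearMap.zero_apply,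
      ContinuousLinearMap.smul_apply, smul_eq_mul, Pi.single_apply]
    simp
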